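/- arXiv:1212.4178 — 2 statements merged into one kernel-verified Lean document; each statement's English description precedes it below -/
import Mathlib

section
/- Let m ≥ 1 be a natural number, ϖ_m = 2∫_0^1 (1-t^m)^(-1/2) dt, and let φ : ℝ → ℝ satisfy: x = ∫_0^{φ(x)} (1-t^m)^(-1/2) dt and 0 ≤ φ(x) ≤ 1 for all x ∈ [0, ϖ_m/2], and φ(ϖ_m - x) = φ(x) for all x ∈ [0, ϖ_m]. Define I(n) = ∫_0^{ϖ_m} φ(x)^n dx, and define Γ_M(n,k) by Γ_M(0,k) = 1 and Γ_M(n+1,k) = (Mn+k)·Γ_M(n,k). Then for all natural numbers n ≥ 1, I(mn)·Γ_{2m}(n, m+2) = Γ_{2m}(n, 2)·ϖ_m. -/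
open MeasureTheory intervalIntegral Set

open MeasureTheory intervalIntegral Set

noncomputable def cfn (m : ℕ) : ℝ → ℝ := fun t => (1 - t ^ m) ^ (-(1/2) : ℝ)

lemma cloverInt (m : ℕ) (hm : 1 ≤ m) (j : ℕ) :
    IntervalIntegrable (fun t : ℝ => t ^ j * cfn m t) volume 0 1 := by
  simp only [cfn]
  have hg : IntervalIntegrable (fun t : ℝ => (1 - t) ^ (-(1/2) : ℝ)) volume 0 1 := by
    have h := (intervalIntegral.intervalIntegrable_rpow' (a := 0) (b := 1)
      (r := -(1/2)) (by norm_num)).comp_sub_left 1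
    simpa using h.symm
  refine hg.mono_fun ?_ ?_
  · have hco : ContinuousOn (fun t : ℝ => t ^ j * (1 - t ^ m) ^ (-(1/2) : ℝ)) (Ioo 0 1) := by
      refine (continuous_pow j).continuousOn.mul ?_
      intro x hx
      have hu : 0 < 1 - x ^ m := by
        have := pow_lt_one₀ hx.1.le hx.2 (by omega : m ≠ 0)
        linarith
      have hc1 : ContinuousAt (fun y : ℝ => y ^ (-(1/2) : ℝ)) (1 - x ^ m) :=
        Real.continuousAt_rpow_const _ _ (Or.inl hu.ne')
      have hc2 : ContinuousAt (fun t : ℝ => 1 - t ^ m) x :=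
        (continuous_const.sub (continuous_pow m)).continuousAt
      exact (ContinuousAt.comp (f := fun t : ℝ => 1 - t ^ m) hc1 hc2).continuousWithinAt
    have h0 : volume.restrict (uIoc (0:ℝ) 1) = volume.restrict (Ioo (0:ℝ) 1) := by
      rw [Set.uIoc_of_le (by norm_num : (0:ℝ) ≤ 1)]
      exact (MeasureTheory.Measure.restrict_congr_set Ioo_ae_eq_Ioc).symm
    rw [h0]
    exact hco.aestronglyMeasurable measurableSet_Ioo
  · rw [Filter.EventuallyLE, ae_restrict_iff' measurableSet_uIoc]
    refine Filter.Eventually.of_forall fun t ht => ?_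
    rw [Set.uIoc_of_le (by norm_num : (0:ℝ) ≤ 1)] at ht
    obtain ⟨ht0, ht1⟩ := ht
    rcases eq_or_lt_of_le ht1 with h1 | h1
    · subst h1
      simp [Real.zero_rpow (by norm_num : (-(1/2) : ℝ) ≠ 0)]
    · have h2 : 0 < 1 - t := by linarith
      have htm : t ^ m ≤ t := by
        simpa using pow_le_pow_of_le_one ht0.le h1.le hm
      have h3 : 0 < 1 - t ^ m := by linarith
      have hb : (1 - t ^ m) ^ (-(1/2) : ℝ) ≤ (1 - t) ^ (-(1/2) : ℝ) :=
        Real.rpow_le_rpow_of_nonpos h2 (by linarith) (by norm_num)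
      have hnn : (0:ℝ) ≤ (1 - t ^ m) ^ (-(1/2) : ℝ) := Real.rpow_nonneg h3.le _
      have hnn2 : (0:ℝ) ≤ (1 - t) ^ (-(1/2) : ℝ) := Real.rpow_nonneg h2.le _
      rw [Real.norm_eq_abs, Real.norm_eq_abs, abs_of_nonneg (by positivity), abs_of_nonneg hnn2]
      calc t ^ j * (1 - t ^ m) ^ (-(1/2) : ℝ)
          ≤ 1 * (1 - t) ^ (-(1/2) : ℝ) :=
            mul_le_mul (pow_le_one₀ ht0.le h1.le) hb hnn (by norm_num)
        _ = (1 - t) ^ (-(1/2) : ℝ) := one_mul _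

lemma cloverRec (m : ℕ) (hm : 1 ≤ m) (k : ℕ) :
    (2*(k:ℝ) + m + 2) * ∫ t in (0:ℝ)..1, t ^ (k+m) * cfn m t
      = (2*(k:ℝ) + 2) * ∫ t in (0:ℝ)..1, t ^ k * cfn m t := by
  simp only [cfn]
  set F : ℝ → ℝ := fun t => t ^ (k+1) * (1 - t ^ m) ^ ((1/2) : ℝ) with hF
  set f' : ℝ → ℝ := fun t => ((k:ℝ)+1) * (t ^ k * (1 - t ^ m) ^ (-(1/2) : ℝ))
      - (((k:ℝ)+1) + (m:ℝ)/2) * (t ^ (k+m) * (1 - t ^ m) ^ (-(1/2) : ℝ)) with hf'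
  have hintk := cloverInt m hm k
  have hintkm := cloverInt m hm (k+m)
  simp only [cfn] at hintk hintkm
  have hint : IntervalIntegrable f' volume 0 1 :=
    (hintk.const_mul _).sub (hintkm.const_mul _)
  have hderiv : ∀ t ∈ Ioo (0:ℝ) 1, HasDerivWithinAt F (f' t) (Ioi t) t := by
    intro t ht
    obtain ⟨ht0, ht1⟩ := ht
    have hu : 0 < 1 - t ^ m := by
      have := pow_lt_one₀ ht0.le ht1 (by omega : m ≠ 0)
      linarith
    have h1 : HasDerivAt (fun s : ℝ => 1 - s ^ m) (-((m:ℝ) * t ^ (m-1))) t := by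
      simpa using ((hasDerivAt_pow m t).const_sub 1)
    have h2 : HasDerivAt (fun s : ℝ => (1 - s ^ m) ^ ((1/2) : ℝ))
        ((-((m:ℝ) * t ^ (m-1))) * (1/2) * (1 - t ^ m) ^ ((1/2 : ℝ) - 1)) t :=
      h1.rpow_const (Or.inl hu.ne')
    have h3 : HasDerivAt F ((((k:ℝ)+1) * t ^ k) * (1 - t ^ m) ^ ((1/2) : ℝ)
        + t ^ (k+1) * ((-((m:ℝ) * t ^ (m-1))) * (1/2) * (1 - t ^ m) ^ ((1/2 : ℝ) - 1))) t := by
      have := (hasDerivAt_pow (k+1) t).mul h2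
      simpa [hF, Pi.mul_def, mul_comm, mul_assoc, mul_left_comm, Nat.add_sub_cancel] using this
    have heq : (((k:ℝ)+1) * t ^ k) * (1 - t ^ m) ^ ((1/2) : ℝ)
        + t ^ (k+1) * ((-((m:ℝ) * t ^ (m-1))) * (1/2) * (1 - t ^ m) ^ ((1/2 : ℝ) - 1)) = f' t := by
      have e1 : ((1:ℝ)/2 : ℝ) - 1 = -(1/2) := by norm_num
      have e2 : (1 - t ^ m) ^ ((1/2) : ℝ) = (1 - t ^ m) * (1 - t ^ m) ^ (-(1/2) : ℝ) := by
        rw [← Real.rpow_one_add' (by linarith) (by norm_num)]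
        norm_num
      have e3 : t ^ (k+1) * t ^ (m-1) = t ^ (k+m) := by
        rw [← pow_add]
        congr 1
        omega
      rw [e1, e2, hf']
      have : t ^ (k+1) * ((-((m:ℝ) * t ^ (m-1))) * (1/2) * (1 - t ^ m) ^ (-(1/2) : ℝ))
          = -((m:ℝ)/2) * (t ^ (k+m) * (1 - t ^ m) ^ (-(1/2) : ℝ)) := by
        rw [← e3]; ring
      rw [this]
      ring
    rw [← heq]
    exact h3.hasDerivWithinAt
  have hcont : ContinuousOn F (Icc 0 1) := by
    refine ((continuous_pow (k+1)).continuousOn).mul ?_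
    intro x _
    have hc1 : ContinuousAt (fun y : ℝ => y ^ ((1/2) : ℝ)) (1 - x ^ m) :=
      Real.continuousAt_rpow_const _ _ (Or.inr (by norm_num))
    have hc2 : ContinuousAt (fun t : ℝ => 1 - t ^ m) x :=
      (continuous_const.sub (continuous_pow m)).continuousAt
    exact (ContinuousAt.comp (f := fun t : ℝ => 1 - t ^ m) hc1 hc2).continuousWithinAt
  have hFTC : ∫ t in (0:ℝ)..1, f' t = F 1 - F 0 :=
    integral_eq_sub_of_hasDeriv_right_of_le (by norm_num) hcont hderiv hint
  have hF1 : F 1 = 0 := by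
    simp [hF, Real.zero_rpow (by norm_num : ((1:ℝ)/2) ≠ 0)]
  have hF0 : F 0 = 0 := by
    simp [hF]
  have hsplit : ∫ t in (0:ℝ)..1, f' t
      = ((k:ℝ)+1) * (∫ t in (0:ℝ)..1, t ^ k * (1 - t ^ m) ^ (-(1/2) : ℝ))
        - (((k:ℝ)+1) + (m:ℝ)/2) * ∫ t in (0:ℝ)..1, t ^ (k+m) * (1 - t ^ m) ^ (-(1/2) : ℝ) := by
    rw [hf']
    rw [intervalIntegral.integral_sub (hintk.const_mul _) (hintkm.const_mul _),
      intervalIntegral.integral_const_mul, intervalIntegral.integral_const_mul]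
  rw [hFTC, hF1, hF0] at hsplit
  linarith

lemma cfn_contOn (m : ℕ) (hm : 1 ≤ m) : ContinuousOn (cfn m) (Ioo 0 1) := by
  intro x hx
  have hu : 0 < 1 - x ^ m := by
    have := pow_lt_one₀ hx.1.le hx.2 (by omega : m ≠ 0)
    linarith
  have hc1 : ContinuousAt (fun y : ℝ => y ^ (-(1/2) : ℝ)) (1 - x ^ m) :=
    Real.continuousAt_rpow_const _ _ (Or.inl hu.ne')
  have hc2 : ContinuousAt (fun t : ℝ => 1 - t ^ m) x :=
    (continuous_const.sub (continuous_pow m)).continuousAt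
  exact (ContinuousAt.comp (f := fun t : ℝ => 1 - t ^ m) hc1 hc2).continuousWithinAt

/-- The congruence Gamma function `Γ_M(n, k)`, defined recursively by
`Γ_M(0, k) = 1` and `Γ_M(n+1, k) = (M n + k) Γ_M(n, k)`. -/
noncomputable def congGamma (M : ℕ) : ℕ → ℕ → ℝ
  | 0, _ => 1
  | n + 1, k => ((M * n + k : ℕ) : ℝ) * congGamma M n k

/-- **Explicit formula for `I_m(mn)`.**
Let `m ≥ 1`, `ϖ = 2 ∫_0^1 (1 - t^m)^(-1/2) dt`, `φ` the `m`-clover function, and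
`I(n) = ∫_0^ϖ φ(x)^n dx`.  Then for all `n ≥ 1`,
`I(mn) Γ_{2m}(n, m+2) = Γ_{2m}(n, 2) ϖ`. -/
theorem clover_integral_formula_mn (m : ℕ) (hm : 1 ≤ m)
    (ϖ : ℝ) (hϖ : ϖ = 2 * ∫ t in (0:ℝ)..1, (1 - t ^ m) ^ (-(1/2) : ℝ))
    (φ : ℝ → ℝ)
    (hφ : ∀ x ∈ Set.Icc 0 (ϖ / 2),
      x = ∫ t in (0:ℝ)..(φ x), (1 - t ^ m) ^ (-(1/2) : ℝ))
    (hφ01 : ∀ x ∈ Set.Icc 0 (ϖ / 2), φ x ∈ Set.Icc (0:ℝ) 1)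
    (hφsymm : ∀ x ∈ Set.Icc 0 ϖ, φ (ϖ - x) = φ x)
    (I : ℕ → ℝ) (hI : ∀ n : ℕ, I n = ∫ x in (0:ℝ)..ϖ, φ x ^ n) :
    ∀ n : ℕ, 1 ≤ n →
      I (m * n) * congGamma (2 * m) n (m + 2) = congGamma (2 * m) n 2 * ϖ := by
  have hm0 : m ≠ 0 := by omega
  set l : ℝ → ℝ := fun r => ∫ t in (0:ℝ)..r, cfn m t with hldef
  have hϖ' : ϖ = 2 * l 1 := hϖ
  have hφ' : ∀ x ∈ Set.Icc 0 (ϖ / 2), l (φ x) = x := fun x hx => (hφ x hx).symm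
  have cInt : IntervalIntegrable (cfn m) volume 0 1 := by
    have h := cloverInt m hm 0
    simpa using h
  have cIntOn : ∀ r ∈ Icc (0:ℝ) 1, IntervalIntegrable (cfn m) volume 0 r := by
    intro r hr
    refine cInt.mono_set ?_
    rw [uIcc_of_le hr.1, uIcc_of_le (by norm_num : (0:ℝ) ≤ 1)]
    exact Icc_subset_Icc le_rfl hr.2
  have hl0 : l 0 = 0 := by simp [hldef]
  have hcpos : ∀ t ∈ Ico (0:ℝ) 1, 0 < cfn m t := by
    intro t ht
    have hu : 0 < 1 - t ^ m := by
      have := pow_lt_one₀ ht.1 ht.2 hm0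
      linarith
    exact Real.rpow_pos_of_pos hu _
  have hlmono : StrictMonoOn l (Icc 0 1) := by
    intro a ha b hb hab
    have hsub : l b - l a = ∫ t in a..b, cfn m t :=
      integral_interval_sub_left (cIntOn b hb) (cIntOn a ha)
    have hpos : 0 < ∫ t in a..b, cfn m t := by
      refine intervalIntegral_pos_of_pos_on ((cIntOn b hb).mono_set ?_) ?_ hab
      · rw [uIcc_of_le hab.le, uIcc_of_le hb.1]
        exact Icc_subset_Icc ha.1 le_rfl
      · intro x hx
        exact hcpos x ⟨le_trans ha.1 hx.1.le, lt_of_lt_of_le hx.2 hb.2⟩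
    have hll : l b - l a > 0 := hsub ▸ hpos
    linarith
  have hl01 : l 0 < l 1 := hlmono ⟨le_rfl, by norm_num⟩ ⟨by norm_num, le_rfl⟩ one_pos
  have hϖpos : 0 < ϖ := by rw [hϖ']; rw [hl0] at hl01; linarith
  have hl1 : l 1 = ϖ / 2 := by rw [hϖ']; ring
  have hw2pos : 0 < ϖ / 2 := by linarith
  have hlmem : ∀ t ∈ Icc (0:ℝ) 1, l t ∈ Icc 0 (ϖ/2) := by
    intro t ht
    constructor
    · rw [← hl0]
      exact hlmono.monotoneOn ⟨le_rfl, by norm_num⟩ ht ht.1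
    · rw [← hl1]
      exact hlmono.monotoneOn ht ⟨by norm_num, le_rfl⟩ ht.2
  have hφl : ∀ t ∈ Icc (0:ℝ) 1, φ (l t) = t := by
    intro t ht
    have h2 : l (φ (l t)) = l t := hφ' (l t) (hlmem t ht)
    exact hlmono.injOn (hφ01 (l t) (hlmem t ht)) ht h2
  have hφmono : StrictMonoOn φ (Icc 0 (ϖ/2)) := by
    intro a ha b hb hab
    by_contra h
    push_neg at h
    have hmono := hlmono.monotoneOn (hφ01 b hb) (hφ01 a ha) h
    rw [hφ' a ha, hφ' b hb] at hmono
    linarith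
  have hφ0 : φ 0 = 0 := by
    have := hφl 0 ⟨le_rfl, by norm_num⟩
    rwa [hl0] at this
  have hφ1 : φ (ϖ/2) = 1 := by
    have := hφl 1 ⟨by norm_num, le_rfl⟩
    rwa [hl1] at this
  have himg : φ '' (Icc 0 (ϖ/2)) = Icc 0 1 := by
    apply Subset.antisymm
    · rintro y ⟨x, hx, rfl⟩
      exact hφ01 x hx
    · intro t ht
      exact ⟨l t, hlmem t ht, hφl t ht⟩
  have hw2mem : ϖ/2 ∈ Icc (0:ℝ) (ϖ/2) := ⟨hw2pos.le, le_rfl⟩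
  have h0mem : (0:ℝ) ∈ Icc (0:ℝ) (ϖ/2) := ⟨le_rfl, hw2pos.le⟩
  have hφcont : ContinuousOn φ (Icc 0 (ϖ/2)) := by
    intro a ha
    rcases eq_or_lt_of_le ha.2 with htop | htop
    · -- a = ϖ/2 : left continuity suffices
      have hφapos : 0 < φ a := by
        rw [htop, hφ1]; norm_num
      have hL : ContinuousWithinAt φ (Iic a) a := by
        apply hφmono.continuousWithinAt_left_of_image_mem_nhdsWithin
        · exact Icc_mem_nhdsLE_of_mem ⟨htop ▸ hw2pos, ha.2⟩
        · rw [himg]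
          refine Icc_mem_nhdsLE_of_mem ⟨hφapos, ?_⟩
          rw [htop, hφ1]
      refine hL.mono ?_
      intro x hx
      exact hx.2.trans htop.ge
    · -- a < ϖ/2
      have hφa1 : φ a < 1 := by
        rw [← hφ1]
        exact hφmono ha hw2mem htop
      have hR : ContinuousWithinAt φ (Ici a) a := by
        apply hφmono.continuousWithinAt_right_of_image_mem_nhdsWithin
        · exact Icc_mem_nhdsGE_of_mem ⟨ha.1, htop⟩
        · rw [himg]
          exact Icc_mem_nhdsGE_of_mem ⟨(hφ01 a ha).1, hφa1⟩
      rcases eq_or_lt_of_le ha.1 with hbot | hbot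
      · refine hR.mono ?_
        intro x hx
        exact hbot ▸ hx.1
      · have hφapos : 0 < φ a := by
          rw [← hφ0]
          exact hφmono h0mem ha hbot
        have hL : ContinuousWithinAt φ (Iic a) a := by
          apply hφmono.continuousWithinAt_left_of_image_mem_nhdsWithin
          · exact Icc_mem_nhdsLE_of_mem ⟨hbot, ha.2⟩
          · rw [himg]
            exact Icc_mem_nhdsLE_of_mem ⟨hφapos, (hφ01 a ha).2⟩
        refine (hL.union hR).mono ?_
        intro x _
        rcases le_total x a with h | h
        · exact Or.inl h
        · exact Or.inr h
  have hu1 : uIcc (0:ℝ) 1 = Icc 0 1 := uIcc_of_le (by norm_num)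
  have hmin : (0:ℝ) ⊓ 1 = 0 := min_eq_left (by norm_num)
  have hmax : (0:ℝ) ⊔ 1 = 1 := max_eq_right (by norm_num)
  have hsubst : ∀ j : ℕ, ∫ x in (0:ℝ)..(ϖ/2), φ x ^ j = ∫ t in (0:ℝ)..1, t ^ j * cfn m t := by
    intro j
    have hgc : ContinuousOn (fun u => φ u ^ j) (Icc 0 (ϖ/2)) := hφcont.pow j
    have himsub : l '' (Icc 0 1) ⊆ Icc 0 (ϖ/2) := by
      rintro y ⟨t, ht, rfl⟩
      exact hlmem t ht
    have hf : ContinuousOn l (uIcc (0:ℝ) 1) :=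
      continuousOn_primitive_interval ((intervalIntegrable_iff').mp cInt)
    have hff : ∀ x ∈ Ioo ((0:ℝ) ⊓ 1) ((0:ℝ) ⊔ 1), HasDerivWithinAt l (cfn m x) (Ioi x) x := by
      intro x hx
      rw [hmin, hmax] at hx
      have hca : ContinuousAt (cfn m) x :=
        (cfn_contOn m hm).continuousAt (IsOpen.mem_nhds isOpen_Ioo hx)
      have hmeas : StronglyMeasurableAtFilter (cfn m) (nhds x) volume :=
        (cfn_contOn m hm).stronglyMeasurableAtFilter isOpen_Ioo x hx
      have hd := intervalIntegral.integral_hasDerivAt_right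
        (cIntOn x ⟨hx.1.le, hx.2.le⟩) hmeas hca
      exact hd.hasDerivWithinAt
    have hgcont : ContinuousOn (fun u => φ u ^ j) (l '' Ioo ((0:ℝ) ⊓ 1) ((0:ℝ) ⊔ 1)) := by
      refine hgc.mono ?_
      rw [hmin, hmax]
      exact subset_trans (image_mono (f := l) Ioo_subset_Icc_self) himsub
    have hg1 : IntegrableOn (fun u => φ u ^ j) (l '' uIcc (0:ℝ) 1) volume := by
      refine (hgc.integrableOn_compact isCompact_Icc).mono_set ?_
      rw [hu1]
      exact himsub
    have hg2 : IntegrableOn (fun x => cfn m x • ((fun u => φ u ^ j) ∘ l) x)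
        (uIcc (0:ℝ) 1) volume := by
      rw [hu1]
      have hIcc : IntegrableOn (fun t : ℝ => t ^ j * cfn m t) (Icc 0 1) volume :=
        (intervalIntegrable_iff_integrableOn_Icc_of_le (by norm_num)).mp (cloverInt m hm j)
      refine hIcc.congr_fun ?_ measurableSet_Icc
      intro x hx
      simp only [Function.comp_apply, smul_eq_mul]
      rw [hφl x hx]
      ring
    have key := intervalIntegral.integral_comp_smul_deriv''' (a := 0) (b := 1)
      (f := l) (f' := cfn m) (g := fun u => φ u ^ j) hf hff hgcont hg1 hg2
    rw [hl0, hl1] at key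
    rw [← key]
    apply intervalIntegral.integral_congr
    intro x hx
    rw [hu1] at hx
    simp only [Function.comp_apply, smul_eq_mul]
    rw [hφl x hx]
    ring
  have hsymm2 : ∀ j : ℕ, (∫ x in (0:ℝ)..ϖ, φ x ^ j) = 2 * ∫ x in (0:ℝ)..(ϖ/2), φ x ^ j := by
    intro j
    have i1 : IntervalIntegrable (fun x => φ x ^ j) volume 0 (ϖ/2) := by
      apply ContinuousOn.intervalIntegrable
      rw [uIcc_of_le hw2pos.le]
      exact hφcont.pow j
    have i2 : IntervalIntegrable (fun x => φ x ^ j) volume (ϖ/2) ϖ := by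
      have i1' := (i1.comp_sub_left ϖ)
      rw [show ϖ - 0 = ϖ by ring, show ϖ - ϖ/2 = ϖ/2 by ring] at i1'
      have i1'' := i1'.symm
      rw [intervalIntegrable_iff] at i1'' ⊢
      refine i1''.congr_fun ?_ measurableSet_uIoc
      intro x hx
      rw [uIoc_of_le (by linarith : ϖ/2 ≤ ϖ)] at hx
      have hsy : φ (ϖ - x) = φ x := hφsymm x ⟨by linarith [hx.1], hx.2⟩
      show φ (ϖ - x) ^ j = φ x ^ j
      rw [hsy]
    have hsplit := intervalIntegral.integral_add_adjacent_intervals i1 i2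
    have hsecond : (∫ x in (ϖ/2)..ϖ, φ x ^ j) = ∫ x in (0:ℝ)..(ϖ/2), φ x ^ j := by
      have hcs := intervalIntegral.integral_comp_sub_left (a := 0) (b := ϖ/2)
        (fun x => φ x ^ j) ϖ
      rw [show ϖ - ϖ/2 = ϖ/2 by ring, sub_zero] at hcs
      rw [← hcs]
      apply intervalIntegral.integral_congr
      intro x hx
      rw [uIcc_of_le hw2pos.le] at hx
      have hsy : φ (ϖ - x) = φ x := hφsymm x ⟨hx.1, by linarith [hx.2]⟩
      show φ (ϖ - x) ^ j = φ x ^ j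
      rw [hsy]
    linarith
  have hJ : ∀ j : ℕ, I j = 2 * ∫ t in (0:ℝ)..1, t ^ j * cfn m t := by
    intro j
    rw [hI j, hsymm2 j, hsubst j]
  have hI0 : I 0 = ϖ := by
    rw [hI 0]
    simp
  have main : ∀ n : ℕ, I (m * n) * congGamma (2*m) n (m+2) = congGamma (2*m) n 2 * ϖ := by
    intro n
    induction n with
    | zero => simp [congGamma, hI0]
    | succ n ih =>
      have hrec := cloverRec m hm (m * n)
      have hidx : m * (n + 1) = m * n + m := by ring
      rw [hidx, hJ (m * n + m)]
      rw [hJ (m * n)] at ih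
      have hg1 : congGamma (2*m) (n+1) (m+2) = ((2*m*n + (m+2) : ℕ) : ℝ) * congGamma (2*m) n (m+2) := rfl
      have hg2 : congGamma (2*m) (n+1) 2 = ((2*m*n + 2 : ℕ) : ℝ) * congGamma (2*m) n 2 := rfl
      rw [hg1, hg2]
      push_cast
      push_cast at hrec
      linear_combination (2 * congGamma (2*m) n (m+2)) * hrec
        + (2*(m:ℝ)*(n:ℝ) + 2) * ih
  intro n _
  exact main n
end

section
/- Let m ≥ 1 be a natural number, ϖ_m = 2∫_0^1 (1-t^m)^(-1/2) dt, and let φ : ℝ → ℝ satisfy: x = ∫_0^{φ(x)} (1-t^m)^(-1/2) dt and 0 ≤ φ(x) ≤ 1 for all x ∈ [0, ϖ_m/2], and φ(ϖ_m - x) = φ(x) for all x ∈ [0, ϖ_m]. Then φ(0) = 0, φ(ϖ_m/2) = 1, φ(ϖ_m) = 0, and φ is differentiable at each point of the open interval (0, ϖ_m) with derivative φ'(x) = √(1 - φ(x)^m) for x ∈ (0, ϖ_m/2) and φ'(x) = -√(1 - φ(x)^m) for x ∈ (ϖ_m/2, ϖ_m). -/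
open Set MeasureTheory Filter intervalIntegral

noncomputable def cloverF (m : ℕ) (r : ℝ) : ℝ := ∫ t in (0:ℝ)..r, (1 - t ^ m) ^ (-(1/2) : ℝ)

lemma clover_base_pos (m : ℕ) (hm : 1 ≤ m) {t : ℝ} (h0 : 0 ≤ t) (h1 : t < 1) :
    0 < 1 - t ^ m := by
  have : t ^ m < 1 := pow_lt_one₀ h0 h1 (by omega)
  linarith

lemma clover_contOn (m : ℕ) (hm : 1 ≤ m) :
    ContinuousOn (fun t : ℝ => (1 - t ^ m) ^ (-(1/2) : ℝ)) (Ioo (-1) 1) := by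
  apply ContinuousOn.rpow_const
  · fun_prop
  · intro t ht
    left
    have : |t| < 1 := abs_lt.2 ⟨ht.1, ht.2⟩
    have h1 : |t ^ m| < 1 := by
      rw [abs_pow]
      exact pow_lt_one₀ (abs_nonneg t) this (by omega)
    have := (abs_lt.1 h1).2
    intro h; rw [sub_eq_zero] at h; linarith

lemma clover_aesm (m : ℕ) (hm : 1 ≤ m) :
    AEStronglyMeasurable (fun t : ℝ => (1 - t ^ m) ^ (-(1/2) : ℝ))
      (volume.restrict (Ioc (0:ℝ) 1)) := by
  rw [← Measure.restrict_congr_set Ioo_ae_eq_Ioc]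
  exact ((clover_contOn m hm).mono (Ioo_subset_Ioo (by norm_num) le_rfl)).aestronglyMeasurable
    measurableSet_Ioo

lemma clover_intable (m : ℕ) (hm : 1 ≤ m) :
    IntervalIntegrable (fun t : ℝ => (1 - t ^ m) ^ (-(1/2) : ℝ)) volume 0 1 := by
  have hg : IntervalIntegrable (fun t : ℝ => (1 - t) ^ (-(1/2) : ℝ)) volume 0 1 := by
    have := (intervalIntegrable_rpow' (a := (0:ℝ)) (b := (1:ℝ))
      (r := (-(1/2):ℝ)) (by norm_num)).comp_sub_left 1
    simpa using this.symm
  rw [intervalIntegrable_iff, uIoc_of_le (by norm_num : (0:ℝ) ≤ 1)] at hg ⊢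
  refine Integrable.mono hg (clover_aesm m hm) ?_
  filter_upwards [ae_restrict_mem measurableSet_Ioc] with t ht
  have h0 : 0 ≤ t := ht.1.le
  rcases eq_or_lt_of_le ht.2 with h1 | h1
  · rw [h1]; simp
  · have hbt : 0 < 1 - t := by linarith
    have hle : t ^ m ≤ t := by
      calc t ^ m ≤ t ^ 1 := pow_le_pow_of_le_one h0 h1.le hm
        _ = t := pow_one t
    have key : (1 - t ^ m) ^ (-(1/2) : ℝ) ≤ (1 - t) ^ (-(1/2) : ℝ) :=
      Real.rpow_le_rpow_of_nonpos hbt (by linarith) (by norm_num)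
    have hpos : 0 < 1 - t ^ m := clover_base_pos m hm h0 h1
    rw [Real.norm_eq_abs, Real.norm_eq_abs, abs_of_nonneg (Real.rpow_nonneg hpos.le _),
      abs_of_nonneg (Real.rpow_nonneg hbt.le _)]
    exact key

lemma clover_intable' (m : ℕ) (hm : 1 ≤ m) {a b : ℝ} (ha : a ∈ Icc (0:ℝ) 1) (hb : b ∈ Icc (0:ℝ) 1) :
    IntervalIntegrable (fun t : ℝ => (1 - t ^ m) ^ (-(1/2) : ℝ)) volume a b :=
  (clover_intable m hm).mono_set (by
    rw [uIcc_of_le (by norm_num : (0:ℝ) ≤ 1)]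
    exact uIcc_subset_Icc ha hb)

lemma clover_F_lt (m : ℕ) (hm : 1 ≤ m) {a b : ℝ} (ha : 0 ≤ a) (hab : a < b) (hb : b ≤ 1) :
    cloverF m a < cloverF m b := by
  have h1 : IntervalIntegrable (fun t : ℝ => (1 - t ^ m) ^ (-(1/2) : ℝ)) volume 0 a :=
    clover_intable' m hm ⟨le_rfl, by norm_num⟩ ⟨ha, by linarith⟩
  have h2 : IntervalIntegrable (fun t : ℝ => (1 - t ^ m) ^ (-(1/2) : ℝ)) volume a b :=
    clover_intable' m hm ⟨ha, by linarith⟩ ⟨by linarith, hb⟩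
  have hpos : 0 < ∫ t in a..b, (1 - t ^ m) ^ (-(1/2) : ℝ) := by
    refine intervalIntegral_pos_of_pos_on h2 (fun t ht => ?_) hab
    exact Real.rpow_pos_of_pos (clover_base_pos m hm (le_trans ha ht.1.le) (lt_of_lt_of_le ht.2 hb)) _
  have hadd := integral_add_adjacent_intervals h1 h2
  unfold cloverF
  linarith [hadd]

lemma clover_bernoulli (m : ℕ) {t : ℝ} (h0 : 0 ≤ t) : 1 - t ^ m ≤ (m : ℝ) * (1 - t) := by
  have h := one_add_mul_le_pow (a := t - 1) (by linarith) m
  have : 1 + (m : ℝ) * (t - 1) ≤ t ^ m := by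
    simpa using h
  nlinarith

lemma clover_lower_int (m : ℕ) (hm : 1 ≤ m) {r : ℝ} (h0 : 0 ≤ r) (h1 : r ≤ 1) :
    2 * ((m : ℝ) ^ (-(1/2) : ℝ)) * Real.sqrt (1 - r)
      ≤ ∫ t in r..1, (1 - t ^ m) ^ (-(1/2) : ℝ) := by
  have hint_f : IntervalIntegrable (fun t : ℝ => (1 - t ^ m) ^ (-(1/2) : ℝ)) volume r 1 :=
    clover_intable' m hm ⟨h0, h1⟩ ⟨by norm_num, le_rfl⟩
  have hg0 : IntervalIntegrable (fun t : ℝ => (1 - t) ^ (-(1/2) : ℝ)) volume r 1 := by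
    have := (intervalIntegrable_rpow' (a := (0:ℝ)) (b := (1:ℝ))
      (r := (-(1/2):ℝ)) (by norm_num)).comp_sub_left 1
    simp only [sub_zero, sub_self] at this
    exact (this.symm).mono_set (by
      rw [uIcc_of_le (by norm_num : (0:ℝ) ≤ 1)]
      exact uIcc_subset_Icc ⟨h0, h1⟩ ⟨by norm_num, le_rfl⟩)
  have hint_h : IntervalIntegrable
      (fun t : ℝ => (m : ℝ) ^ (-(1/2) : ℝ) * (1 - t) ^ (-(1/2) : ℝ)) volume r 1 :=
    hg0.const_mul _
  have hmn : (0:ℝ) ≤ (m : ℝ) := Nat.cast_nonneg m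
  have hpt : ∀ t ∈ Icc r 1,
      (m : ℝ) ^ (-(1/2) : ℝ) * (1 - t) ^ (-(1/2) : ℝ) ≤ (1 - t ^ m) ^ (-(1/2) : ℝ) := by
    intro t ht
    rcases eq_or_lt_of_le ht.2 with heq | hlt
    · rw [heq]; simp [Real.zero_rpow (show (-(1/2):ℝ) ≠ 0 by norm_num)]
    · have h1t : 0 < 1 - t := by linarith
      have hpos : 0 < 1 - t ^ m := clover_base_pos m hm (le_trans h0 ht.1) hlt
      have hb : 1 - t ^ m ≤ (m : ℝ) * (1 - t) := clover_bernoulli m (le_trans h0 ht.1)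
      calc (m : ℝ) ^ (-(1/2) : ℝ) * (1 - t) ^ (-(1/2) : ℝ)
          = ((m : ℝ) * (1 - t)) ^ (-(1/2) : ℝ) := (Real.mul_rpow hmn h1t.le).symm
        _ ≤ (1 - t ^ m) ^ (-(1/2) : ℝ) :=
            Real.rpow_le_rpow_of_nonpos hpos hb (by norm_num)
  have hmono := intervalIntegral.integral_mono_on h1 hint_h hint_f hpt
  have hcomp : (∫ t in r..1, (1 - t) ^ (-(1/2) : ℝ))
      = ∫ u in (0:ℝ)..(1 - r), u ^ (-(1/2) : ℝ) := by
    have := intervalIntegral.integral_comp_sub_left (a := r) (b := 1)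
      (fun u : ℝ => u ^ (-(1/2) : ℝ)) 1
    simpa using this
  have hval : (∫ u in (0:ℝ)..(1 - r), u ^ (-(1/2) : ℝ)) = 2 * Real.sqrt (1 - r) := by
    rw [integral_rpow (Or.inl (by norm_num))]
    have : (-(1/2) : ℝ) + 1 = 1/2 := by norm_num
    rw [this, Real.zero_rpow (by norm_num : (1/2:ℝ) ≠ 0), Real.sqrt_eq_rpow]
    ring
  calc 2 * ((m : ℝ) ^ (-(1/2) : ℝ)) * Real.sqrt (1 - r)
      = ∫ t in r..1, (m : ℝ) ^ (-(1/2) : ℝ) * (1 - t) ^ (-(1/2) : ℝ) := by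
        rw [intervalIntegral.integral_const_mul, hcomp, hval]; ring
    _ ≤ _ := hmono


set_option maxHeartbeats 1000000 in
/-- **Boundary values and derivative of the clover function.**
Let `m ≥ 1`, `ϖ = 2 ∫_0^1 (1 - t^m)^(-1/2) dt`, and `φ` the `m`-clover function.
Then `φ(0) = 0`, `φ(ϖ/2) = 1`, `φ(ϖ) = 0`, and `φ` is differentiable on `(0, ϖ)` with
`φ'(x) = √(1 - φ(x)^m)` on `(0, ϖ/2)` and `φ'(x) = -√(1 - φ(x)^m)` on `(ϖ/2, ϖ)`. -/
theorem clover_function_values_and_deriv (m : ℕ) (hm : 1 ≤ m)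
    (ϖ : ℝ) (hϖ : ϖ = 2 * ∫ t in (0:ℝ)..1, (1 - t ^ m) ^ (-(1/2) : ℝ))
    (φ : ℝ → ℝ)
    (hφ : ∀ x ∈ Set.Icc 0 (ϖ / 2),
      x = ∫ t in (0:ℝ)..(φ x), (1 - t ^ m) ^ (-(1/2) : ℝ))
    (hφ01 : ∀ x ∈ Set.Icc 0 (ϖ / 2), φ x ∈ Set.Icc (0:ℝ) 1)
    (hφsymm : ∀ x ∈ Set.Icc 0 ϖ, φ (ϖ - x) = φ x) :
    φ 0 = 0 ∧ φ (ϖ / 2) = 1 ∧ φ ϖ = 0 ∧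
      (∀ x ∈ Set.Ioo 0 ϖ, DifferentiableAt ℝ φ x) ∧
      (∀ x ∈ Set.Ioo 0 (ϖ / 2), deriv φ x = Real.sqrt (1 - φ x ^ m)) ∧
      (∀ x ∈ Set.Ioo (ϖ / 2) ϖ, deriv φ x = -Real.sqrt (1 - φ x ^ m)) := by
  have hF : ∀ x ∈ Set.Icc 0 (ϖ / 2), x = cloverF m (φ x) := by
    intro x hx; rw [cloverF]; exact hφ x hx
  have hc : ϖ / 2 = cloverF m 1 := by rw [hϖ, cloverF]; ring
  have hF0 : cloverF m 0 = 0 := intervalIntegral.integral_same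
  have hcpos : 0 < ϖ / 2 := by
    rw [hc, ← hF0]; exact clover_F_lt m hm le_rfl one_pos le_rfl
  have hϖpos : 0 < ϖ := by linarith
  -- injectivity of cloverF on [0,1]
  have hFinj : ∀ u v : ℝ, u ∈ Icc (0:ℝ) 1 → v ∈ Icc (0:ℝ) 1 →
      cloverF m u = cloverF m v → u = v := by
    intro u v hu hv h
    rcases lt_trichotomy u v with hlt | heq | hgt
    · exact absurd h (ne_of_lt (clover_F_lt m hm hu.1 hlt hv.2))
    · exact heq
    · exact absurd h.symm (ne_of_lt (clover_F_lt m hm hv.1 hgt hu.2))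
  -- boundary values
  have hmem0 : (0:ℝ) ∈ Icc 0 (ϖ / 2) := ⟨le_rfl, hcpos.le⟩
  have hmemc : (ϖ / 2) ∈ Icc 0 (ϖ / 2) := ⟨hcpos.le, le_rfl⟩
  have hφ0 : φ 0 = 0 := by
    refine hFinj _ _ (hφ01 0 hmem0) ⟨le_rfl, zero_le_one⟩ ?_
    rw [← hF 0 hmem0, hF0]
  have hφc : φ (ϖ / 2) = 1 := by
    refine hFinj _ _ (hφ01 _ hmemc) ⟨zero_le_one, le_rfl⟩ ?_
    rw [← hF _ hmemc, ← hc]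
  have hφϖ : φ ϖ = 0 := by
    have := hφsymm ϖ ⟨hϖpos.le, le_rfl⟩
    simpa [hφ0] using this.symm
  -- strict monotonicity of φ on [0, ϖ/2]
  have hmono : StrictMonoOn φ (Icc 0 (ϖ / 2)) := by
    intro y1 h1 y2 h2 h12
    by_contra hle
    push_neg at hle
    rcases eq_or_lt_of_le hle with heq | hlt
    · have e1 := hF y1 h1
      have e2 := hF y2 h2
      rw [heq] at e2
      exact absurd (e1.trans e2.symm) (ne_of_lt h12)
    · have := clover_F_lt m hm (hφ01 y2 h2).1 hlt (hφ01 y1 h1).2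
      rw [← hF y1 h1, ← hF y2 h2] at this
      exact absurd h12 (not_lt.2 this.le)
  -- φ maps onto [0,1]
  have himg : Icc (0:ℝ) 1 ⊆ φ '' Icc 0 (ϖ / 2) := by
    intro v hv
    have hFv : cloverF m v ∈ Icc 0 (ϖ / 2) := by
      constructor
      · rw [← hF0]
        rcases eq_or_lt_of_le hv.1 with h | h
        · rw [← h]
        · exact (clover_F_lt m hm le_rfl h hv.2).le
      · rw [hc]
        rcases eq_or_lt_of_le hv.2 with h | h
        · rw [h]
        · exact (clover_F_lt m hm hv.1 h le_rfl).le
    refine ⟨cloverF m v, hFv, ?_⟩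
    exact hFinj _ _ (hφ01 _ hFv) hv ((hF _ hFv).symm)
  -- φ x ∈ (0,1) for x in the open interval
  have hrmem : ∀ x ∈ Ioo 0 (ϖ / 2), φ x ∈ Ioo (0:ℝ) 1 := by
    intro x hx
    have hxm : x ∈ Icc 0 (ϖ / 2) := ⟨hx.1.le, hx.2.le⟩
    have h1 := (hφ01 x hxm).1
    have h2 := (hφ01 x hxm).2
    constructor
    · rcases eq_or_lt_of_le h1 with h | h
      · exfalso
        have := hF x hxm
        rw [← h, hF0] at this
        exact absurd this.symm (ne_of_lt hx.1)
      · exact h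
    · rcases eq_or_lt_of_le h2 with h | h
      · exfalso
        have := hF x hxm
        rw [h, ← hc] at this
        exact absurd this (ne_of_lt hx.2)
      · exact h
  -- continuity of φ at interior points
  have hcontAt : ∀ x ∈ Ioo 0 (ϖ / 2), ContinuousAt φ x := by
    intro x hx
    refine hmono.continuousAt_of_image_mem_nhds (Icc_mem_nhds hx.1 hx.2) ?_
    have hr := hrmem x hx
    exact mem_of_superset (mem_of_superset (Ioo_mem_nhds hr.1 hr.2) Ioo_subset_Icc_self) himg
  -- continuity from the left at ϖ/2
  have hcontc : ContinuousWithinAt φ (Iic (ϖ / 2)) (ϖ / 2) := by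
    refine hmono.continuousWithinAt_left_of_image_mem_nhdsWithin
      (Icc_mem_nhdsLE_of_mem ⟨hcpos, le_rfl⟩) ?_
    rw [hφc]
    exact mem_of_superset (Icc_mem_nhdsLE_of_mem ⟨one_pos, le_rfl⟩) himg
  -- derivative at interior points of (0, ϖ/2)
  have hderivIoo : ∀ x ∈ Ioo 0 (ϖ / 2), HasDerivAt φ (Real.sqrt (1 - φ x ^ m)) x := by
    intro x hx
    have hr := hrmem x hx
    have hpos : 0 < 1 - φ x ^ m := clover_base_pos m hm hr.1.le hr.2
    have hfc : ContinuousAt (fun t : ℝ => (1 - t ^ m) ^ (-(1/2) : ℝ)) (φ x) := by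
      have hbase : ContinuousAt (fun t : ℝ => 1 - t ^ m) (φ x) := by fun_prop
      exact hbase.rpow_const (Or.inl hpos.ne')
    have hsm : StronglyMeasurableAtFilter (fun t : ℝ => (1 - t ^ m) ^ (-(1/2) : ℝ))
        (nhds (φ x)) volume := by
      refine ContinuousOn.stronglyMeasurableAtFilter isOpen_Ioo (clover_contOn m hm) _ ?_
      exact ⟨by linarith [hr.1], hr.2⟩
    have hFderiv : HasDerivAt (cloverF m) ((1 - φ x ^ m) ^ (-(1/2) : ℝ)) (φ x) :=
      intervalIntegral.integral_hasDerivAt_right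
        (clover_intable' m hm ⟨le_rfl, zero_le_one⟩ ⟨hr.1.le, hr.2.le⟩) hsm hfc
    have hfpos : 0 < (1 - φ x ^ m) ^ (-(1/2) : ℝ) := Real.rpow_pos_of_pos hpos _
    have hev : ∀ᶠ y in nhds x, cloverF m (φ y) = y := by
      filter_upwards [Icc_mem_nhds hx.1 hx.2] with y hy
      exact (hF y hy).symm
    have hinv : HasDerivAt φ (((1 - φ x ^ m) ^ (-(1/2) : ℝ))⁻¹) x :=
      hFderiv.of_local_left_inverse (hcontAt x hx) hfpos.ne' hev
    convert hinv using 1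
    rw [Real.rpow_neg hpos.le, inv_inv, Real.sqrt_eq_rpow]
  -- left derivative 0 at ϖ/2
  have hleft : HasDerivWithinAt φ 0 (Iic (ϖ / 2)) (ϖ / 2) := by
    rw [hasDerivWithinAt_iff_tendsto_slope, Iic_diff_right]
    have hIoo : Ioo 0 (ϖ / 2) ∈ nhdsWithin (ϖ / 2) (Iio (ϖ / 2)) :=
      Ioo_mem_nhdsLT_of_mem ⟨hcpos, le_rfl⟩
    apply squeeze_zero'
    · filter_upwards [hIoo] with y hy
      have hym : y ∈ Icc 0 (ϖ / 2) := ⟨hy.1.le, hy.2.le⟩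
      rw [slope_def_field, hφc]
      have h1 : φ y ≤ 1 := (hφ01 y hym).2
      have h2 : y - ϖ / 2 < 0 := by linarith [hy.2]
      have h3 : (φ y - 1) / (y - ϖ / 2) = (1 - φ y) / (ϖ / 2 - y) := by
        rw [div_eq_div_iff (ne_of_lt h2) (by linarith : ϖ / 2 - y ≠ 0)]
        ring
      rw [h3]
      exact div_nonneg (by linarith) (by linarith)
    · show ∀ᶠ y in _, slope φ (ϖ / 2) y ≤ Real.sqrt m * Real.sqrt (1 - φ y)
      filter_upwards [hIoo] with y hy
      have hym : y ∈ Icc 0 (ϖ / 2) := ⟨hy.1.le, hy.2.le⟩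
      have hr := hrmem y hy
      set s := Real.sqrt (1 - φ y) with hs
      have hspos : 0 < s := Real.sqrt_pos.2 (by linarith [hr.2])
      have hs2 : s ^ 2 = 1 - φ y := Real.sq_sqrt (by linarith [hr.2])
      have hmpos : 0 < Real.sqrt m := Real.sqrt_pos.2 (by positivity)
      have hmr : (m : ℝ) ^ (-(1/2) : ℝ) = (Real.sqrt m)⁻¹ := by
        rw [Real.rpow_neg (Nat.cast_nonneg m), Real.sqrt_eq_rpow]
      -- key lower bound on the gap
      have hgap : 2 * (Real.sqrt m)⁻¹ * s ≤ ϖ / 2 - y := by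
        have hlow := clover_lower_int m hm (hφ01 y hym).1 hr.2.le
        rw [hmr] at hlow
        have hadd := integral_add_adjacent_intervals
          (clover_intable' m hm ⟨le_rfl, zero_le_one⟩ ⟨(hφ01 y hym).1, hr.2.le⟩)
          (clover_intable' m hm ⟨(hφ01 y hym).1, hr.2.le⟩ ⟨zero_le_one, le_rfl⟩)
        have : (∫ t in (φ y)..1, (1 - t ^ m) ^ (-(1/2) : ℝ))
            = cloverF m 1 - cloverF m (φ y) := by
          unfold cloverF; linarith [hadd]
        rw [this, ← hc, ← hF y hym] at hlow
        exact hlow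
      have hgappos : 0 < 2 * (Real.sqrt m)⁻¹ * s := by positivity
      rw [slope_def_field, hφc]
      have hy2 : y - ϖ / 2 < 0 := by linarith [hy.2]
      have h3 : (φ y - 1) / (y - ϖ / 2) = (1 - φ y) / (ϖ / 2 - y) := by
        rw [div_eq_div_iff (ne_of_lt hy2) (by linarith : ϖ / 2 - y ≠ 0)]
        ring
      rw [h3]
      calc (1 - φ y) / (ϖ / 2 - y) ≤ (1 - φ y) / (2 * (Real.sqrt m)⁻¹ * s) := by
            gcongr
            · linarith [hr.2]
        _ = Real.sqrt m * s / 2 := by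
            rw [← hs2]; field_simp
        _ ≤ Real.sqrt m * s := by
            have := mul_pos hmpos hspos; linarith
    · have hφtends : Tendsto φ (nhdsWithin (ϖ / 2) (Iio (ϖ / 2))) (nhds 1) := by
        have := hcontc.tendsto
        rw [hφc] at this
        exact this.mono_left (nhdsWithin_mono _ Iio_subset_Iic_self)
      have hcont2 : Tendsto (fun y => Real.sqrt m * Real.sqrt (1 - φ y))
          (nhdsWithin (ϖ / 2) (Iio (ϖ / 2))) (nhds (Real.sqrt m * Real.sqrt (1 - 1))) := by
        exact (Real.continuous_sqrt.tendsto _).comp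
          ((continuous_const.sub continuous_id).tendsto _ |>.comp hφtends) |>.const_mul _
      simpa using hcont2
  -- derivative at ϖ/2 is 0, using symmetry for the right side
  have hderivc : HasDerivAt φ 0 (ϖ / 2) := by
    have heqc : ϖ - ϖ / 2 = ϖ / 2 := by ring
    have hright : HasDerivWithinAt φ 0 (Ici (ϖ / 2)) (ϖ / 2) := by
      have hg : HasDerivWithinAt (fun y : ℝ => ϖ - y) (-1) (Ici (ϖ / 2)) (ϖ / 2) :=
        ((hasDerivAt_id (ϖ / 2)).const_sub ϖ).hasDerivWithinAt
      have hmaps : MapsTo (fun y : ℝ => ϖ - y) (Ici (ϖ / 2)) (Iic (ϖ / 2)) := by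
        intro y hy
        simp only [mem_Iic]
        have : ϖ / 2 ≤ y := hy
        linarith
      have hf' : HasDerivWithinAt φ 0 (Iic (ϖ / 2)) ((fun y : ℝ => ϖ - y) (ϖ / 2)) := by
        simpa [heqc] using hleft
      have hcomp := HasDerivWithinAt.comp (ϖ / 2) hf' hg hmaps
      have hev : φ =ᶠ[nhdsWithin (ϖ / 2) (Ici (ϖ / 2))] (φ ∘ fun y : ℝ => ϖ - y) := by
        filter_upwards [mem_nhdsWithin_of_mem_nhds (Icc_mem_nhds (show (0:ℝ) < ϖ / 2 from hcpos) (show ϖ / 2 < ϖ by linarith))]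
          with y hy
        exact (hφsymm y hy).symm
      have hx0 : φ (ϖ / 2) = (φ ∘ fun y : ℝ => ϖ - y) (ϖ / 2) := by
        simp [heqc]
      simpa using hcomp.congr_of_eventuallyEq hev hx0
    have := hleft.union hright
    rw [Iic_union_Ici] at this
    exact hasDerivWithinAt_univ.mp this
  -- derivative on (ϖ/2, ϖ)
  have hderivIoo' : ∀ x ∈ Ioo (ϖ / 2) ϖ,
      HasDerivAt φ (-Real.sqrt (1 - φ x ^ m)) x := by
    intro x hx
    have hx' : ϖ - x ∈ Ioo 0 (ϖ / 2) := ⟨by linarith [hx.2], by linarith [hx.1]⟩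
    have h1 := hderivIoo (ϖ - x) hx'
    have hg : HasDerivAt (fun y : ℝ => ϖ - y) (-1) x := (hasDerivAt_id x).const_sub ϖ
    have hcomp := HasDerivAt.comp x h1 hg
    have hev : φ =ᶠ[nhds x] (φ ∘ fun y : ℝ => ϖ - y) := by
      filter_upwards [Icc_mem_nhds (by linarith [hx.1] : (0:ℝ) < x) hx.2] with y hy
      exact (hφsymm y hy).symm
    have hfin := hcomp.congr_of_eventuallyEq hev
    have hsx : φ (ϖ - x) = φ x := hφsymm x ⟨by linarith [hx.1], hx.2.le⟩
    rw [hsx, mul_neg_one] at hfin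
    exact hfin
  refine ⟨hφ0, hφc, hφϖ, ?_, ?_, ?_⟩
  · intro x hx
    rcases lt_trichotomy x (ϖ / 2) with h | h | h
    · exact (hderivIoo x ⟨hx.1, h⟩).differentiableAt
    · rw [h]; exact hderivc.differentiableAt
    · exact (hderivIoo' x ⟨h, hx.2⟩).differentiableAt
  · intro x hx
    exact (hderivIoo x hx).deriv
  · intro x hx
    exact (hderivIoo' x hx).deriv
end
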